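/- Let X be a rearrangement invariant function space on (0,∞) with the Fatou property such that L∞ embeds continuously into X and such that fχ_A ∈ X_a for every f ∈ X and every measurable set A of finite measure. Then for every f ∈ X, dist(f, X_a) = f*(∞) · φ_X(∞), where f*(∞) = lim_{t→∞} f*(t) and φ_X(∞) = lim_{t→∞} ‖χ_{(0,t)}‖_X. -/

import Mathlib

open Filter Topology MeasureTheory Set

/-- A **Banach ideal space** on a measure space `(α, μ)`: a collection of (real-valued)
measurable functions with a complete lattice-compatible norm satisfying the ideal property. -/
structure BanachIdealSpace (α : Type*) [MeasurableSpace α] (μ : Measure α) where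
  Mem : (α → ℝ) → Prop
  N : (α → ℝ) → ℝ
  mem_zero : Mem 0
  mem_add : ∀ f g, Mem f → Mem g → Mem (f + g)
  mem_smul : ∀ (c : ℝ) f, Mem f → Mem (c • f)
  measurable : ∀ f, Mem f → AEMeasurable f μ
  N_nonneg : ∀ f, 0 ≤ N f
  N_zero : N 0 = 0
  N_eq_zero : ∀ f, Mem f → N f = 0 → (∀ᵐ x ∂μ, f x = 0)
  N_add : ∀ f g, Mem f → Mem g → N (f + g) ≤ N f + N g
  N_smul : ∀ (c : ℝ) f, N (c • f) = |c| * N f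
  ideal : ∀ f g, AEMeasurable f μ → (∀ᵐ x ∂μ, |f x| ≤ |g x|) → Mem g →
    Mem f ∧ N f ≤ N g
  complete : ∀ u : ℕ → (α → ℝ), (∀ n, Mem (u n)) →
    (∀ ε : ℝ, 0 < ε → ∃ n₀ : ℕ, ∀ m n, n₀ ≤ m → n₀ ≤ n → N (u m - u n) < ε) →
    ∃ f, Mem f ∧ Tendsto (fun n => N (u n - f)) atTop (𝓝 0)

namespace BanachIdealSpace

variable {α : Type*} [MeasurableSpace α] {μ : Measure α}

/-- Distance (w.r.t. a norm functional `N`) from `f` to a set `S` of functions. -/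
noncomputable def distIn (N : (α → ℝ) → ℝ) (f : α → ℝ) (S : Set (α → ℝ)) : ℝ :=
  sInf ((fun g => N (f - g)) '' S)

/-- The set of **order continuous elements** of a (generalized) function space given by a
membership predicate `Mem` and a norm `N`: those `f` such that every sequence `uₙ` with
`0 ≤ uₙ ≤ |f|` a.e., a.e. non-increasing and converging to `0` a.e., satisfies `N (uₙ) → 0`. -/
def ocSet (μ : Measure α) (Mem : (α → ℝ) → Prop) (N : (α → ℝ) → ℝ) : Set (α → ℝ) :=
  {f | Mem f ∧ ∀ u : ℕ → (α → ℝ), (∀ n, Mem (u n)) →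
    (∀ n, ∀ᵐ x ∂μ, 0 ≤ u n x ∧ u n x ≤ |f x|) →
    (∀ n, ∀ᵐ x ∂μ, u (n + 1) x ≤ u n x) →
    (∀ᵐ x ∂μ, Tendsto (fun n => u n x) atTop (𝓝 0)) →
    Tendsto (fun n => N (u n)) atTop (𝓝 0)}

/-- The ideal `X_a` of order continuous elements of a Banach ideal space `X`. -/
def oc (X : BanachIdealSpace α μ) : Set (α → ℝ) := ocSet μ X.Mem X.N

/-- An **order ideal** of a Banach ideal space: a closed solid linear subspace. -/
structure IsOrderIdeal (X : BanachIdealSpace α μ) (J : Set (α → ℝ)) : Prop where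
  subset : ∀ f ∈ J, X.Mem f
  zero : (0 : α → ℝ) ∈ J
  add : ∀ f g, f ∈ J → g ∈ J → f + g ∈ J
  smul : ∀ (c : ℝ) f, f ∈ J → c • f ∈ J
  solid : ∀ f g, f ∈ J → X.Mem g → (∀ᵐ x ∂μ, |g x| ≤ |f x|) → g ∈ J
  closed : ∀ (u : ℕ → (α → ℝ)) f, (∀ n, u n ∈ J) → X.Mem f →
    Tendsto (fun n => X.N (f - u n)) atTop (𝓝 0) → f ∈ J

/-- The **Fatou property** of a Banach ideal space. -/
def Fatou (X : BanachIdealSpace α μ) : Prop :=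
  ∀ (u : ℕ → (α → ℝ)) (f : α → ℝ), (∀ n, X.Mem (u n)) → AEMeasurable f μ →
    (∀ᵐ x ∂μ, 0 ≤ u 0 x) → (∀ᵐ x ∂μ, Monotone fun n => u n x) →
    (∀ᵐ x ∂μ, Tendsto (fun n => u n x) atTop (𝓝 (f x))) →
    BddAbove (Set.range fun n => X.N (u n)) →
    X.Mem f ∧ Tendsto (fun n => X.N (u n)) atTop (𝓝 (X.N f))

/-- The **semi-Fatou property**: if `0 ≤ uₙ ↑ f ∈ X` then `‖uₙ‖ ↑ ‖f‖`. -/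
def SemiFatou (X : BanachIdealSpace α μ) : Prop :=
  ∀ (u : ℕ → (α → ℝ)) (f : α → ℝ), (∀ n, X.Mem (u n)) → X.Mem f →
    (∀ᵐ x ∂μ, 0 ≤ u 0 x) → (∀ᵐ x ∂μ, Monotone fun n => u n x) →
    (∀ᵐ x ∂μ, Tendsto (fun n => u n x) atTop (𝓝 (f x))) →
    Tendsto (fun n => X.N (u n)) atTop (𝓝 (X.N f))

/-- A Banach ideal space is **rearrangement invariant (symmetric)**: equimeasurable
functions belong to the space simultaneously and have equal norms. -/
def Symmetric (X : BanachIdealSpace α μ) : Prop :=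
  ∀ f g, AEMeasurable f μ →
    (∀ lam : ℝ, 0 < lam → μ {x | lam < |f x|} = μ {x | lam < |g x|}) →
    X.Mem g → X.Mem f ∧ X.N f = X.N g

/-- The **non-increasing rearrangement** of a function `f` (w.r.t. the measure `μ`). -/
noncomputable def rear (μ : Measure α) (f : α → ℝ) (t : ℝ) : ℝ :=
  sInf {lam : ℝ | 0 < lam ∧ μ {x | lam < |f x|} ≤ ENNReal.ofReal t}

/-- A (generalized) function space given by `(Mem, N)` contains a **lattice isometric copy
of `ℓ∞`**: there is a linear map from bounded sequences which preserves absolute values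
(hence the lattice operations) and is an isometry for the sup norm on bounded sequences. -/
def HasLatticeCopyLinf (Mem : (α → ℝ) → Prop) (N : (α → ℝ) → ℝ) : Prop :=
  ∃ T : (ℕ → ℝ) → (α → ℝ),
    (∀ x y, T (x + y) = T x + T y) ∧
    (∀ (c : ℝ) x, T (c • x) = c • T x) ∧
    (∀ x, T (fun n => |x n|) = fun t => |T x t|) ∧
    (∀ x : ℕ → ℝ, BddAbove (Set.range fun n => |x n|) →
      Mem (T x) ∧ N (T x) = ⨆ n, |x n|)

end BanachIdealSpace

open BanachIdealSpace

section Helpers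
open BanachIdealSpace

noncomputable abbrev μ0 : MeasureTheory.Measure ℝ := volume.restrict (Set.Ioi (0 : ℝ))

lemma mu0_univ : μ0 Set.univ = ⊤ := by
  simp [Measure.restrict_apply, Real.volume_Ioi]

variable (X : BanachIdealSpace ℝ μ0)

lemma N1_pos (hLinf : X.Mem fun _ => 1) : 0 < X.N (fun _ => 1) := by
  rcases lt_or_eq_of_le (X.N_nonneg fun _ => 1) with h | h
  · exact h
  · exfalso
    have h0 := X.N_eq_zero _ hLinf h.symm
    rw [ae_iff] at h0
    have : μ0 (Set.univ : Set ℝ) = 0 := by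
      convert h0 using 2
      ext x; simp
    rw [mu0_univ] at this
    exact ENNReal.top_ne_zero this

lemma const_eq_smul (c : ℝ) : (fun _ : ℝ => c) = c • (fun _ : ℝ => (1:ℝ)) := by
  funext x; simp

lemma mem_const (hLinf : X.Mem fun _ => 1) (c : ℝ) : X.Mem fun _ => c := by
  rw [const_eq_smul]; exact X.mem_smul c _ hLinf

lemma indicator_norm (hsymm : X.Symmetric) (hLinf : X.Mem fun _ => 1)
    (S : Set ℝ) (hS : MeasurableSet S) (hSμ : μ0 S = ⊤) (c : ℝ) (hc : 0 < c) :
    X.Mem (S.indicator fun _ => c) ∧ X.N (S.indicator fun _ => c) = c * X.N (fun _ => 1) := by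
  have hmeas : AEMeasurable (S.indicator fun _ => c) μ0 :=
    ((measurable_const (a := c)).indicator hS).aemeasurable
  have hdist : ∀ lam : ℝ, 0 < lam →
      μ0 {x | lam < |S.indicator (fun _ => c) x|} = μ0 {x | lam < |(fun _ : ℝ => c) x|} := by
    intro lam hlam
    rcases lt_or_ge lam c with h | h
    · have e1 : {x : ℝ | lam < |S.indicator (fun _ => c) x|} = S := by
        ext x
        by_cases hx : x ∈ S
        · simp [Set.indicator_of_mem hx, abs_of_pos hc, h, hx]
        · simp [Set.indicator_of_notMem hx, hx, not_lt_of_ge hlam.le]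
      have e2 : {x : ℝ | lam < |(fun _ : ℝ => c) x|} = Set.univ := by
        ext x; simp [abs_of_pos hc, h]
      rw [e1, e2, hSμ, mu0_univ]
    · have e1 : {x : ℝ | lam < |S.indicator (fun _ => c) x|} = ∅ := by
        ext x
        by_cases hx : x ∈ S
        · simp [Set.indicator_of_mem hx, abs_of_pos hc, not_lt_of_ge h, h]
        · simp [Set.indicator_of_notMem hx, not_lt_of_ge hlam.le]
      have e2 : {x : ℝ | lam < |(fun _ : ℝ => c) x|} = ∅ := by
        ext x; simp [abs_of_pos hc, not_lt_of_ge h]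
      rw [e1, e2]
  have h := hsymm _ _ hmeas hdist (mem_const X hLinf c)
  refine ⟨h.1, ?_⟩
  rw [h.2, const_eq_smul, X.N_smul, abs_of_pos hc]

lemma zero_mem_oc : (0 : ℝ → ℝ) ∈ X.oc := by
  refine ⟨X.mem_zero, fun u hu h0 _ _ => ?_⟩
  have hz : ∀ n, X.N (u n) = 0 := by
    intro n
    have hae : ∀ᵐ x ∂μ0, |u n x| ≤ |(0 : ℝ → ℝ) x| := by
      filter_upwards [h0 n] with x hx
      simp only [Pi.zero_apply, abs_zero]
      rw [abs_of_nonneg hx.1]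
      simpa using hx.2
    have hle := X.ideal (u n) 0 (X.measurable _ (hu n)) hae X.mem_zero
    exact le_antisymm (by simpa [X.N_zero] using hle.2) (X.N_nonneg _)
  simp only [hz]; exact tendsto_const_nhds
lemma norm_ge_of_infinite_level (hsymm : X.Symmetric) (hLinf : X.Mem fun _ => 1)
    (g : ℝ → ℝ) (hg : X.Mem g) (c : ℝ) (hc : 0 < c)
    (hinf : μ0 {x | c < |g x|} = ⊤) : c * X.N (fun _ => 1) ≤ X.N g := by
  have hgm := X.measurable g hg
  set g' := hgm.mk g with hg'def
  have hgg' : g =ᵐ[μ0] g' := hgm.ae_eq_mk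
  have hg'm : Measurable g' := hgm.measurable_mk
  set E : Set ℝ := {x | c < |g' x|} with hEdef
  have hEm : MeasurableSet E := measurableSet_lt measurable_const hg'm.abs
  have hEinf : μ0 E = ⊤ := by
    rw [← hinf]
    apply measure_congr
    filter_upwards [hgg'] with x hx
    change (c < |g' x|) = (c < |g x|)
    rw [hx]
  obtain ⟨hmem, hN⟩ := indicator_norm X hsymm hLinf E hEm hEinf c hc
  have := X.ideal (E.indicator fun _ => c) g
    (((measurable_const (a := c)).indicator hEm).aemeasurable) ?ae hg
  · rw [← hN]; exact this.2
  case ae =>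
    filter_upwards [hgg'] with x hx
    by_cases hxE : x ∈ E
    · rw [Set.indicator_of_mem hxE, hx, abs_of_pos hc]
      exact le_of_lt hxE
    · rw [Set.indicator_of_notMem hxE]
      simp [abs_nonneg]

lemma exists_finite_level (hsymm : X.Symmetric) (hLinf : X.Mem fun _ => 1)
    (f : ℝ → ℝ) (hf : X.Mem f) : ∃ lam : ℝ, 0 < lam ∧ μ0 {x | lam < |f x|} < ⊤ := by
  by_contra hcon
  push_neg at hcon
  obtain ⟨n, hn⟩ := exists_nat_gt (X.N f / X.N (fun _ => 1))
  have hc : (0:ℝ) < (n:ℝ) + 1 := by positivity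
  have hinf : μ0 {x | (n:ℝ) + 1 < |f x|} = ⊤ :=
    top_le_iff.mp (hcon _ hc)
  have h1 := norm_ge_of_infinite_level X hsymm hLinf f hf _ hc hinf
  have hN1 := N1_pos X hLinf
  have : X.N f / X.N (fun _ => 1) < (n:ℝ) + 1 := hn.trans (lt_add_one _)
  rw [div_lt_iff₀ hN1] at this
  linarith

lemma oc_finite_dist (hsymm : X.Symmetric) (hLinf : X.Mem fun _ => 1)
    (g : ℝ → ℝ) (hg : g ∈ X.oc) (ε : ℝ) (hε : 0 < ε) :
    μ0 {x | ε < |g x|} < ⊤ := by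
  by_contra hcon
  have hinf : μ0 {x | ε < |g x|} = ⊤ := top_le_iff.mp (not_lt.mp hcon)
  obtain ⟨hgmem, hgoc⟩ := hg
  have hgm := X.measurable g hgmem
  set g' := hgm.mk g with hg'def
  have hgg' : g =ᵐ[μ0] g' := hgm.ae_eq_mk
  have hg'm : Measurable g' := hgm.measurable_mk
  set E : Set ℝ := {x | ε < |g' x|} with hEdef
  have hEm : MeasurableSet E := measurableSet_lt measurable_const hg'm.abs
  have hEinf : μ0 E = ⊤ := by
    rw [← hinf]
    apply measure_congr
    filter_upwards [hgg'] with x hx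
    change (ε < |g' x|) = (ε < |g x|)
    rw [hx]
  set En : ℕ → Set ℝ := fun n => E ∩ Set.Ioi (n:ℝ) with hEndef
  have hEnm : ∀ n, MeasurableSet (En n) := fun n => hEm.inter measurableSet_Ioi
  have hEninf : ∀ n, μ0 (En n) = ⊤ := by
    intro n
    rw [Measure.restrict_apply (hEnm n)]
    by_contra hfin
    have hEsplit : E ∩ Set.Ioi (0:ℝ) ⊆ (En n ∩ Set.Ioi 0) ∪ Set.Ioc 0 (n:ℝ) := by
      rintro x ⟨hxE, hx0⟩
      rcases le_or_gt x n with h | h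
      · exact Or.inr ⟨hx0, h⟩
      · exact Or.inl ⟨⟨hxE, h⟩, hx0⟩
    have h1 : (⊤ : ENNReal) ≤ volume (En n ∩ Set.Ioi 0) + volume (Set.Ioc 0 (n:ℝ)) := by
      calc (⊤ : ENNReal) = μ0 E := hEinf.symm
        _ = volume (E ∩ Set.Ioi 0) := Measure.restrict_apply hEm
        _ ≤ volume ((En n ∩ Set.Ioi 0) ∪ Set.Ioc 0 (n:ℝ)) := measure_mono hEsplit
        _ ≤ _ := measure_union_le _ _
    have h2 : volume (En n ∩ Set.Ioi 0) + volume (Set.Ioc 0 (n:ℝ)) ≠ ⊤ := by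
      apply ENNReal.add_ne_top.mpr
      refine ⟨hfin, ?_⟩
      rw [Real.volume_Ioc]
      exact ENNReal.ofReal_ne_top
    exact h2 (top_le_iff.mp h1)
  set u : ℕ → ℝ → ℝ := fun n => (En n).indicator (fun _ => ε) with hudef
  have hind : ∀ n, X.Mem (u n) ∧ X.N (u n) = ε * X.N (fun _ => 1) := fun n =>
    indicator_norm X hsymm hLinf (En n) (hEnm n) (hEninf n) ε hε
  have htend := hgoc u (fun n => (hind n).1) ?h0 ?hdec ?hlim
  · have : Tendsto (fun _ : ℕ => ε * X.N (fun _ => 1)) atTop (𝓝 0) := by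
      have he : (fun n : ℕ => X.N (u n)) = fun _ : ℕ => ε * X.N (fun _ => 1) := by
        funext n; exact (hind n).2
      rwa [he] at htend
    have h0 : ε * X.N (fun _ => 1) = 0 := tendsto_nhds_unique tendsto_const_nhds this
    have hN1 := N1_pos X hLinf
    nlinarith
  case h0 =>
    intro n
    filter_upwards [hgg'] with x hx
    show 0 ≤ (En n).indicator (fun _ => ε) x ∧ (En n).indicator (fun _ => ε) x ≤ |g x|
    constructor
    · exact Set.indicator_nonneg (fun _ _ => hε.le) x
    · by_cases hxE : x ∈ En n
      · rw [Set.indicator_of_mem hxE, hx]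
        exact le_of_lt hxE.1
      · rw [Set.indicator_of_notMem hxE]
        exact abs_nonneg _
  case hdec =>
    intro n
    apply Filter.Eventually.of_forall
    intro x
    show (En (n+1)).indicator (fun _ => ε) x ≤ (En n).indicator (fun _ => ε) x
    by_cases hxE : x ∈ En (n+1)
    · rw [Set.indicator_of_mem hxE, Set.indicator_of_mem]
      exact ⟨hxE.1, lt_trans (by exact_mod_cast Nat.lt_succ_self n : (n:ℝ) < ((n+1 : ℕ) : ℝ)) hxE.2⟩
    · rw [Set.indicator_of_notMem hxE]
      exact Set.indicator_nonneg (fun _ _ => hε.le) x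
  case hlim =>
    apply Filter.Eventually.of_forall
    intro x
    obtain ⟨n₀, hn₀⟩ := exists_nat_gt x
    apply tendsto_atTop_of_eventually_const (i₀ := n₀)
    intro n hn
    show (En n).indicator (fun _ => ε) x = 0
    apply Set.indicator_of_notMem
    intro hxE
    have : (n:ℝ) < x := hxE.2
    have : x < (n:ℝ) := hn₀.trans_le (by exact_mod_cast hn)
    linarith
lemma indicator_one_mem (hLinf : X.Mem fun _ => 1) (S : Set ℝ) (hS : MeasurableSet S) :
    X.Mem (S.indicator fun _ => (1:ℝ)) ∧ X.N (S.indicator fun _ => (1:ℝ)) ≤ X.N (fun _ => 1) := by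
  apply X.ideal _ _ ((measurable_const (a := (1:ℝ))).indicator hS).aemeasurable _ hLinf
  apply Filter.Eventually.of_forall
  intro x
  by_cases hx : x ∈ S
  · rw [Set.indicator_of_mem hx]
  · rw [Set.indicator_of_notMem hx]; simp

lemma sup_eq_N1 (hFatou : X.Fatou) (hLinf : X.Mem fun _ => 1) :
    (⨆ t : {t : ℝ // 0 < t}, X.N (Set.indicator (Set.Ioo (0:ℝ) t.1) fun _ => 1)) =
      X.N (fun _ => 1) := by
  have hub : ∀ t : {t : ℝ // 0 < t},
      X.N (Set.indicator (Set.Ioo (0:ℝ) t.1) fun _ => 1) ≤ X.N (fun _ => 1) :=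
    fun t => (indicator_one_mem X hLinf _ measurableSet_Ioo).2
  have hBdd : BddAbove (Set.range fun t : {t : ℝ // 0 < t} =>
      X.N (Set.indicator (Set.Ioo (0:ℝ) t.1) fun _ => 1)) := by
    refine ⟨X.N (fun _ => 1), ?_⟩
    rintro y ⟨t, rfl⟩
    exact hub t
  set u : ℕ → ℝ → ℝ := fun n => Set.indicator (Set.Ioo (0:ℝ) ((n:ℝ)+1)) (fun _ => 1)
    with hudef
  have humem : ∀ n, X.Mem (u n) := fun n =>
    (indicator_one_mem X hLinf _ measurableSet_Ioo).1
  have hF := hFatou u (fun _ => 1) humem aemeasurable_const ?h0 ?hmono ?hconv ?hbdd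
  · apply le_antisymm (ciSup_le hub)
    apply le_of_tendsto hF.2
    apply Filter.Eventually.of_forall
    intro n
    exact le_ciSup hBdd ⟨(n:ℝ)+1, by positivity⟩
  case h0 =>
    apply Filter.Eventually.of_forall
    intro x
    exact Set.indicator_nonneg (fun _ _ => zero_le_one) x
  case hmono =>
    apply Filter.Eventually.of_forall
    intro x
    apply monotone_nat_of_le_succ
    intro n
    simp only [hudef]
    push_cast
    by_cases hx : x ∈ Set.Ioo (0:ℝ) ((n:ℝ)+1)
    · rw [Set.indicator_of_mem hx,
        Set.indicator_of_mem (show x ∈ Set.Ioo (0:ℝ) ((n:ℝ)+1+1) from ⟨hx.1, by linarith [hx.2]⟩)]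
    · rw [Set.indicator_of_notMem hx]
      exact Set.indicator_nonneg (fun _ _ => zero_le_one) x
  case hconv =>
    filter_upwards [ae_restrict_mem measurableSet_Ioi] with x hx
    obtain ⟨n₀, hn₀⟩ := exists_nat_gt x
    apply tendsto_atTop_of_eventually_const (i₀ := n₀)
    intro n hn
    simp only [hudef]
    apply Set.indicator_of_mem
    refine ⟨hx, ?_⟩
    have : (n₀:ℝ) ≤ (n:ℝ) := by exact_mod_cast hn
    linarith
  case hbdd =>
    refine ⟨X.N (fun _ => 1), ?_⟩
    rintro y ⟨n, rfl⟩
    exact (indicator_one_mem X hLinf _ measurableSet_Ioo).2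

lemma clamp_props (a y : ℝ) (ha : 0 ≤ a) :
    |y - max (min y a) (-a)| ≤ |y| ∧ |max (min y a) (-a)| ≤ a ∧
    (∀ ε : ℝ, 0 < ε → (ε < |y - max (min y a) (-a)| ↔ a + ε < |y|)) := by
  rcases le_total y a with h1 | h1 <;> rcases le_total (-a) y with h2 | h2
  · -- -a ≤ y ≤ a
    rw [min_eq_left h1, max_eq_left h2]
    refine ⟨by simp [abs_nonneg], by rw [abs_le]; exact ⟨h2, h1⟩, fun ε hε => ?_⟩
    constructor
    · intro h; simp at h; linarith
    · intro h
      have : |y| ≤ a := abs_le.mpr ⟨h2, h1⟩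
      linarith
  · -- y ≤ -a (and y ≤ a)
    rw [min_eq_left h1, max_eq_right h2]
    have hy : y ≤ 0 := by linarith
    have hg : y - (-a) ≤ 0 ∨ True := Or.inr trivial
    refine ⟨?_, by rw [abs_neg, abs_of_nonneg ha], fun ε hε => ?_⟩
    · rcases le_or_gt (y + a) 0 with h | h
      · rw [abs_of_nonpos (by linarith), abs_of_nonpos hy]; linarith
      · rw [abs_of_pos (by linarith), abs_of_nonpos hy]; linarith
    · rcases le_or_gt (y + a) 0 with h | h
      · rw [abs_of_nonpos (by linarith), abs_of_nonpos hy]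
        constructor <;> intro <;> linarith
      · rw [abs_of_pos (by linarith), abs_of_nonpos hy]
        constructor <;> intro <;> linarith
  · -- a ≤ y
    rw [min_eq_right h1, max_eq_left (by linarith)]
    have hy : 0 ≤ y := le_trans ha h1
    refine ⟨?_, by rw [abs_of_nonneg ha], fun ε hε => ?_⟩
    · rw [abs_of_nonneg (by linarith), abs_of_nonneg hy]; linarith
    · rw [abs_of_nonneg (by linarith), abs_of_nonneg hy]
      constructor <;> intro <;> linarith
  · -- a ≤ y ≤ -a : forces a = 0, y = 0
    have ha0 : a = 0 := by linarith
    have hy0 : y = 0 := by rw [ha0] at h1 h2; linarith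
    subst ha0; subst hy0
    simp
lemma rear_nonneg (f : ℝ → ℝ) (t : ℝ) : 0 ≤ rear μ0 f t :=
  Real.sInf_nonneg (fun _ hlam => hlam.1.le)

lemma rear_bddBelow (f : ℝ → ℝ) :
    BddBelow (Set.range fun t : {t : ℝ // 0 < t} => rear μ0 f t.1) := by
  refine ⟨0, ?_⟩
  rintro y ⟨s, rfl⟩
  exact rear_nonneg f s.1

lemma rear_set_nonempty (hsymm : X.Symmetric) (hLinf : X.Mem fun _ => 1)
    (f : ℝ → ℝ) (hf : X.Mem f) (t : ℝ) (ht : 0 < t) :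
    {lam : ℝ | 0 < lam ∧ μ0 {x | lam < |f x|} ≤ ENNReal.ofReal t}.Nonempty := by
  obtain ⟨lam0, hlam0, hfin⟩ := exists_finite_level X hsymm hLinf f hf
  have hfm := X.measurable f hf
  set f' := hfm.mk f with hf'def
  have hff' : f =ᵐ[μ0] f' := hfm.ae_eq_mk
  have hf'm : Measurable f' := hfm.measurable_mk
  have hcongr : ∀ c : ℝ, μ0 {x | c < |f x|} = μ0 {x | c < |f' x|} := by
    intro c
    apply measure_congr
    filter_upwards [hff'] with x hx
    change (c < |f x|) = (c < |f' x|)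
    rw [hx]
  set S : ℕ → Set ℝ := fun n => {x | lam0 + n < |f' x|} with hSdef
  have hSm : ∀ n, MeasurableSet (S n) := fun n => measurableSet_lt measurable_const hf'm.abs
  have hanti : Antitone S := by
    intro m n hmn x hx
    have hx' : lam0 + (n:ℝ) < |f' x| := hx
    have : (m:ℝ) ≤ (n:ℝ) := by exact_mod_cast hmn
    show lam0 + (m:ℝ) < |f' x|
    linarith
  have hfin0 : μ0 (S 0) ≠ ⊤ := by
    have hsub : S 0 ⊆ {x | lam0 < |f' x|} := by
      intro x hx
      have hx' : lam0 + ((0:ℕ):ℝ) < |f' x| := hx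
      show lam0 < |f' x|
      push_cast at hx'
      linarith
    have hcalc : μ0 (S 0) < ⊤ :=
      calc μ0 (S 0) ≤ μ0 {x | lam0 < |f' x|} := measure_mono hsub
        _ = μ0 {x | lam0 < |f x|} := (hcongr lam0).symm
        _ < ⊤ := hfin
    exact ne_of_lt hcalc
  have hiInter : (⋂ n, S n) = ∅ := by
    ext x
    simp only [Set.mem_iInter, Set.mem_empty_iff_false, iff_false, not_forall]
    obtain ⟨n, hn⟩ := exists_nat_ge (|f' x| - lam0)
    refine ⟨n, ?_⟩
    show ¬ (lam0 + (n:ℝ) < |f' x|)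
    push_neg
    linarith
  have htend := tendsto_measure_iInter_atTop (μ := μ0)
    (fun n => (hSm n).nullMeasurableSet) hanti ⟨0, hfin0⟩
  rw [hiInter, measure_empty] at htend
  have hev := htend.eventually_lt_const (ENNReal.ofReal_pos.mpr ht)
  obtain ⟨n, hn⟩ := hev.exists
  simp only [Function.comp] at hn
  refine ⟨lam0 + n, by positivity, ?_⟩
  rw [hcongr]
  exact le_of_lt hn

lemma level_finite_above_inf (hsymm : X.Symmetric) (hLinf : X.Mem fun _ => 1)
    (f : ℝ → ℝ) (hf : X.Mem f) (b : ℝ)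
    (hb : (⨅ t : {t : ℝ // 0 < t}, rear μ0 f t.1) < b) : μ0 {x | b < |f x|} < ⊤ := by
  obtain ⟨t, ht⟩ := exists_lt_of_ciInf_lt hb
  have ht' : sInf {lam : ℝ | 0 < lam ∧ μ0 {x | lam < |f x|} ≤ ENNReal.ofReal t.1} < b := ht
  obtain ⟨lam, hlamset, hlamlt⟩ :=
    exists_lt_of_csInf_lt (rear_set_nonempty X hsymm hLinf f hf t.1 t.2) ht'
  calc μ0 {x | b < |f x|} ≤ μ0 {x | lam < |f x|} :=
        measure_mono (fun x hx => lt_trans hlamlt hx)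
    _ ≤ ENNReal.ofReal t.1 := hlamset.2
    _ < ⊤ := ENNReal.ofReal_lt_top
lemma mem_sub {u v : ℝ → ℝ} (hu : X.Mem u) (hv : X.Mem v) : X.Mem (u - v) := by
  have h := X.mem_add u ((-1) • v) hu (X.mem_smul _ _ hv)
  convert h using 1
  funext x
  simp [sub_eq_add_neg]

end Helpers

/-- **(de Jonge, 1977.)** Let `X` be a rearrangement invariant function space on `(0,∞)`
with the Fatou property such that `L∞` embeds continuously into `X` (i.e. `χ_{(0,∞)} ∈ X`)
and `f·χ_A ∈ X_a` for every `f ∈ X` and every measurable set `A` of finite measure. Then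
for every `f ∈ X`, `dist (f, X_a) = f*(∞) · φ_X(∞)`, where `f*(∞) = lim_{t→∞} f*(t)`
(the infimum of the non-increasing function `f*`) and
`φ_X(∞) = lim_{t→∞} ‖χ_{(0,t)}‖_X` (the supremum of the fundamental function). -/
theorem dist_to_oc_eq_rear_infty_mul_fund_infty
    (X : BanachIdealSpace ℝ (volume.restrict (Set.Ioi (0 : ℝ))))
    (hsymm : X.Symmetric) (hFatou : X.Fatou)
    (hLinf : X.Mem (fun _ => 1))
    (hD : ∀ f, X.Mem f → ∀ A : Set ℝ, MeasurableSet A →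
      (volume.restrict (Set.Ioi (0 : ℝ))) A < ⊤ → Set.indicator A f ∈ X.oc)
    (f : ℝ → ℝ) (hf : X.Mem f) :
    distIn X.N f X.oc =
      (⨅ t : {t : ℝ // 0 < t}, rear (volume.restrict (Set.Ioi (0 : ℝ))) f t.1) *
      (⨆ t : {t : ℝ // 0 < t},
        X.N (Set.indicator (Set.Ioo (0 : ℝ) t.1) (fun _ => 1))) := by
  have hN1 := N1_pos X hLinf
  rw [sup_eq_N1 X hFatou hLinf]
  set N1 := X.N (fun _ => 1) with hN1def
  set a : ℝ := ⨅ t : {t : ℝ // 0 < t}, rear μ0 f t.1 with hadef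
  have ha0 : 0 ≤ a := le_ciInf (fun t => rear_nonneg f t.1)
  have hfm := X.measurable f hf
  set f' := hfm.mk f with hf'def
  have hff' : f =ᵐ[μ0] f' := hfm.ae_eq_mk
  have hf'm : Measurable f' := hfm.measurable_mk
  have hcongr : ∀ c : ℝ, μ0 {x | c < |f' x|} = μ0 {x | c < |f x|} := by
    intro c
    apply measure_congr
    filter_upwards [hff'] with x hx
    change (c < |f' x|) = (c < |f x|)
    rw [hx]
  apply le_antisymm
  · -- upper bound: distIn ≤ a * N1
    set g : ℝ → ℝ := fun x => f' x - max (min (f' x) a) (-a) with hgdef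
    have hgm : Measurable g := hf'm.sub ((hf'm.min measurable_const).max measurable_const)
    have hgabs : ∀ x, |g x| ≤ |f' x| := fun x => (clamp_props a (f' x) ha0).1
    have hgmem : X.Mem g := by
      refine (X.ideal g f hgm.aemeasurable ?_ hf).1
      filter_upwards [hff'] with x hx
      rw [hx]
      exact hgabs x
    have hgoc : g ∈ X.oc := by
      refine ⟨hgmem, fun u humem hu0 hudec hulim => ?_⟩
      rw [Metric.tendsto_atTop]
      intro δ hδ
      have hN1nn : 0 ≤ N1 := hN1.le
      set ε : ℝ := δ / (2 * (N1 + 1)) with hεdef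
      have hεpos : 0 < ε := by positivity
      set A : Set ℝ := {x | ε < |g x|} with hAdef
      have hAm : MeasurableSet A := measurableSet_lt measurable_const hgm.abs
      have hAfin : μ0 A < ⊤ := by
        have heq : A = {x | a + ε < |f' x|} := by
          ext x
          exact (clamp_props a (f' x) ha0).2.2 ε hεpos
        rw [heq, hcongr]
        exact level_finite_above_inf X hsymm hLinf f hf (a + ε) (by rw [← hadef]; linarith)
      have hGoc := hD g hgmem A hAm hAfin
      have hGm : Measurable (Set.indicator A g) := hgm.indicator hAm
      set v : ℕ → ℝ → ℝ := fun n x => min (u n x) |Set.indicator A g x| with hvdef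
      have hvm : ∀ n, AEMeasurable (v n) μ0 := fun n =>
        (X.measurable _ (humem n)).min hGm.abs.aemeasurable
      have hvmem : ∀ n, X.Mem (v n) := by
        intro n
        refine (X.ideal (v n) (u n) (hvm n) ?_ (humem n)).1
        filter_upwards [hu0 n] with x hx
        have h1 : 0 ≤ v n x := le_min hx.1 (abs_nonneg _)
        have h2 : v n x ≤ u n x := min_le_left _ _
        rw [abs_of_nonneg h1, abs_of_nonneg hx.1]
        exact h2
      have hvtend := hGoc.2 v hvmem ?v0 ?vdec ?vlim
      case v0 =>
        intro n
        filter_upwards [hu0 n] with x hx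
        exact ⟨le_min hx.1 (abs_nonneg _), min_le_right _ _⟩
      case vdec =>
        intro n
        filter_upwards [hudec n] with x hx
        exact min_le_min hx le_rfl
      case vlim =>
        filter_upwards [hulim, ae_all_iff.mpr hu0] with x hx hx0
        apply squeeze_zero (fun n => le_min (hx0 n).1 (abs_nonneg _))
          (fun n => min_le_left _ _) hx
      have hsplit : ∀ n, X.N (u n) ≤ X.N (v n) + ε * N1 := by
        intro n
        have hmemv := hvmem n
        have hmemd : X.Mem (u n - v n) := mem_sub X (humem n) hmemv
        have heq : u n = v n + (u n - v n) := by
          funext x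
          simp
        have hb : X.N (u n - v n) ≤ ε * N1 := by
          have hbb := (X.ideal (u n - v n) (ε • (fun _ : ℝ => (1:ℝ)))
            (X.measurable _ hmemd) ?bound (X.mem_smul _ _ hLinf)).2
          · rwa [X.N_smul, abs_of_pos hεpos] at hbb
          case bound =>
            filter_upwards [hu0 n] with x hx
            have hval : |(ε • fun _ : ℝ => (1:ℝ)) x| = ε := by
              simp [abs_of_pos hεpos]
            rw [hval, Pi.sub_apply]
            by_cases hxA : x ∈ A
            · have hGx : |Set.indicator A g x| = |g x| := by
                rw [Set.indicator_of_mem hxA]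
              have hvx : v n x = u n x := by
                show min (u n x) |Set.indicator A g x| = u n x
                rw [hGx]
                exact min_eq_left hx.2
              rw [hvx]
              simpa using hεpos.le
            · have hGx : Set.indicator A g x = 0 := Set.indicator_of_notMem hxA _
              have hgx : |g x| ≤ ε := not_lt.mp hxA
              have hvx : v n x = 0 := by
                show min (u n x) |Set.indicator A g x| = 0
                rw [hGx, abs_zero]
                exact min_eq_right hx.1
              rw [hvx, sub_zero, abs_of_nonneg hx.1]
              exact le_trans hx.2 hgx
        calc X.N (u n) = X.N (v n + (u n - v n)) := by rw [← heq]
          _ ≤ X.N (v n) + X.N (u n - v n) := X.N_add _ _ hmemv hmemd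
          _ ≤ X.N (v n) + ε * N1 := by linarith
      rw [Metric.tendsto_atTop] at hvtend
      obtain ⟨n₁, hn₁⟩ := hvtend (δ/2) (by linarith)
      refine ⟨n₁, fun n hn => ?_⟩
      rw [Real.dist_eq, sub_zero, abs_of_nonneg (X.N_nonneg _)]
      have h1 := hsplit n
      have h2 := hn₁ n hn
      rw [Real.dist_eq, sub_zero, abs_of_nonneg (X.N_nonneg _)] at h2
      have hεN1 : ε * N1 < δ/2 := by
        rw [hεdef]
        rw [div_mul_eq_mul_div, div_lt_iff₀ (by positivity)]
        nlinarith
      linarith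
    -- distIn ≤ N (f - g) ≤ a * N1
    have hfgmem : X.Mem (f - g) := mem_sub X hf hgmem
    have hclamp : ∀ᵐ x ∂μ0, |(f - g) x| ≤ |(a • fun _ : ℝ => (1:ℝ)) x| := by
      filter_upwards [hff'] with x hx
      have heq : (f - g) x = max (min (f' x) a) (-a) := by
        show f x - g x = max (min (f' x) a) (-a)
        rw [hx, hgdef]
        ring
      rw [heq]
      have hval : |(a • fun _ : ℝ => (1:ℝ)) x| = a := by
        simp [abs_of_nonneg ha0]
      rw [hval]
      exact (clamp_props a (f' x) ha0).2.1
    have hNfg : X.N (f - g) ≤ a * N1 := by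
      have h := (X.ideal (f - g) (a • (fun _ : ℝ => (1:ℝ)))
        (X.measurable _ hfgmem) hclamp (X.mem_smul _ _ hLinf)).2
      rwa [X.N_smul, abs_of_nonneg ha0] at h
    have hle : distIn X.N f X.oc ≤ X.N (f - g) := by
      apply csInf_le
      · refine ⟨0, ?_⟩
        rintro y ⟨h, _, rfl⟩
        exact X.N_nonneg _
      · exact ⟨g, hgoc, rfl⟩
    linarith
  · -- lower bound: a * N1 ≤ distIn
    refine le_csInf ⟨X.N (f - 0), Set.mem_image_of_mem _ (zero_mem_oc X)⟩ ?_
    rintro b ⟨g, hgoc, rfl⟩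
    have hgmem : X.Mem g := hgoc.1
    have hfgmem : X.Mem (f - g) := mem_sub X hf hgmem
    rcases eq_or_lt_of_le ha0 with h0 | hapos
    · rw [← h0, zero_mul]
      exact X.N_nonneg _
    by_contra hcon
    push_neg at hcon
    have hdiv : X.N (f - g) / N1 < a := by
      rw [div_lt_iff₀ hN1]
      linarith
    obtain ⟨c, hc1, hc2⟩ := exists_between hdiv
    have hcpos : 0 < c := lt_of_le_of_lt (div_nonneg (X.N_nonneg _) hN1.le) hc1
    have hkey : μ0 {x | c < |(f - g) x|} = ⊤ := by
      by_contra hfin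
      have hfin' : μ0 {x | c < |(f - g) x|} < ⊤ := lt_top_iff_ne_top.mpr hfin
      set c' : ℝ := (c + a) / 2 with hc'def
      have hgfin : μ0 {x | c' - c < |g x|} < ⊤ :=
        oc_finite_dist X hsymm hLinf g hgoc _ (by rw [hc'def]; linarith)
      have hsub : {x | c' < |f x|} ⊆ {x | c < |(f - g) x|} ∪ {x | c' - c < |g x|} := by
        intro x hx
        by_contra hx2
        rw [Set.mem_union, not_or] at hx2
        obtain ⟨h1, h2⟩ := hx2
        have h1' : |(f - g) x| ≤ c := not_lt.mp h1
        have h2' : |g x| ≤ c' - c := not_lt.mp h2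
        have hx' : c' < |f x| := hx
        have htri : |f x| ≤ |(f - g) x| + |g x| := by
          have : f x = (f - g) x + g x := by simp
          rw [this]
          exact abs_add_le _ _
        linarith
      have hm : μ0 {x | c' < |f x|} < ⊤ := by
        calc μ0 {x | c' < |f x|}
            ≤ μ0 ({x | c < |(f - g) x|} ∪ {x | c' - c < |g x|}) := measure_mono hsub
          _ ≤ μ0 {x | c < |(f - g) x|} + μ0 {x | c' - c < |g x|} := measure_union_le _ _
          _ < ⊤ := ENNReal.add_lt_top.mpr ⟨hfin', hgfin⟩
      set t : ℝ := (μ0 {x | c' < |f x|}).toReal + 1 with htdef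
      have htpos : 0 < t := by positivity
      have hmem : c' ∈ {lam : ℝ | 0 < lam ∧ μ0 {x | lam < |f x|} ≤ ENNReal.ofReal t} := by
        refine ⟨by rw [hc'def]; linarith, ?_⟩
        rw [← ENNReal.ofReal_toReal (ne_of_lt hm)]
        apply ENNReal.ofReal_le_ofReal
        rw [htdef]
        linarith
      have h1 : rear μ0 f t ≤ c' :=
        csInf_le ⟨0, fun lam hlam => hlam.1.le⟩ hmem
      have h2 : a ≤ rear μ0 f t := by
        rw [hadef]
        exact ciInf_le (rear_bddBelow f) ⟨t, htpos⟩
      have : c' < a := by rw [hc'def]; linarith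
      linarith
    have hge := norm_ge_of_infinite_level X hsymm hLinf (f - g) hfgmem c hcpos hkey
    rw [div_lt_iff₀ hN1] at hc1
    linarith
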